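/- Let M be a matroid on {1,...,n} of rank r with no loops. Then the number of nbc sets of M of size k containing the element 1 equals the number of nbc bases of the truncation of M to rank k, for every 1 ≤ k ≤ r. -/

import Mathlib

/-- A circuit of a matroid is a minimal dependent set. -/
def Matroid.IsCircuit' {α : Type*} (M : Matroid α) (C : Set α) : Prop :=
  M.Dep C ∧ ∀ D ⊂ C, M.Indep D

/-- `S` contains no broken circuit of `M`: for every circuit `C` with minimum element
`e`, the broken circuit `C \ {e}` is not a subset of `S`. -/
def Nbc {α : Type*} [LinearOrder α] (M : Matroid α) (S : Set α) : Prop :=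
  ∀ C (e : α), M.IsCircuit' C → e ∈ C → (∀ x ∈ C, e ≤ x) → ¬ C \ {e} ⊆ S

/-- every dependent set contains a circuit (finite ground set, full ground). -/
lemma exists_circuit'_aux {n : ℕ} (M : Matroid (Fin n)) (hE : M.E = Set.univ) :
    ∀ m (D : Set (Fin n)), D.ncard ≤ m → ¬ M.Indep D →
      ∃ C ⊆ D, M.IsCircuit' C := by
  intro m
  induction m with
  | zero =>
    intro D h hD
    rw [Nat.le_zero, Set.ncard_eq_zero (Set.toFinite D)] at h
    exact absurd (h ▸ M.empty_indep) hD
  | succ m ih =>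
    intro D hD hDind
    by_cases h : ∀ D' ⊂ D, M.Indep D'
    · exact ⟨D, subset_rfl, Matroid.dep_iff.mpr ⟨hDind, by rw [hE]; exact Set.subset_univ _⟩, h⟩
    · push_neg at h
      obtain ⟨D', hss, hind⟩ := h
      obtain ⟨C, hC, hC2⟩ := ih D'
        (by have := Set.ncard_lt_ncard hss (Set.toFinite D); omega) hind
      exact ⟨C, hC.trans hss.subset, hC2⟩

lemma exists_circuit' {n : ℕ} (M : Matroid (Fin n)) (hE : M.E = Set.univ)
    {D : Set (Fin n)} (hD : ¬ M.Indep D) : ∃ C ⊆ D, M.IsCircuit' C :=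
  exists_circuit'_aux M hE D.ncard D le_rfl hD

/-- a circuit has a minimum element -/
lemma circuit'_exists_min {n : ℕ} {M : Matroid (Fin n)} {C : Set (Fin n)}
    (hC : M.IsCircuit' C) : ∃ e ∈ C, ∀ x ∈ C, e ≤ x := by
  have hne : C.Nonempty := by
    rcases C.eq_empty_or_nonempty with h | h
    · exact absurd (h ▸ M.empty_indep) hC.1.not_indep
    · exact h
  obtain ⟨e, he, hmin⟩ := Set.exists_min_image C id (Set.toFinite C) hne
  exact ⟨e, he, hmin⟩

/-- an nbc set is independent -/
lemma nbc_indep {n : ℕ} {M : Matroid (Fin n)} (hE : M.E = Set.univ)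
    {S : Set (Fin n)} (h : Nbc M S) : M.Indep S := by
  by_contra hS
  obtain ⟨C, hCS, hC⟩ := exists_circuit' M hE hS
  obtain ⟨e, he, hmin⟩ := circuit'_exists_min hC
  exact h C e hC he hmin ((Set.diff_subset).trans hCS)

theorem nbc_sets_eq_nbc_bases_of_truncation {n : ℕ} [NeZero n]
    (M : Matroid (Fin n)) (hE : M.E = Set.univ)
    (hloopless : ∀ x : Fin n, M.Indep {x})
    (r k : ℕ) (hr : ∀ B, M.IsBase B → B.ncard = r) (hk1 : 1 ≤ k) (hkr : k ≤ r)
    (T : Matroid (Fin n)) (hTE : T.E = Set.univ)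
    (hTindep : ∀ I, T.Indep I ↔ M.Indep I ∧ I.ncard ≤ k) :
    {S : Set (Fin n) | S.ncard = k ∧ (0 : Fin n) ∈ S ∧ Nbc M S}.ncard =
      {B : Set (Fin n) | T.IsBase B ∧ Nbc T B}.ncard := by
  congr 1
  ext S
  simp only [Set.mem_setOf_eq]
  constructor
  · rintro ⟨hcard, h0, hnbc⟩
    have hSind : M.Indep S := nbc_indep hE hnbc
    have hTS : T.Indep S := (hTindep S).2 ⟨hSind, le_of_eq hcard⟩
    have hbase : T.IsBase S := by
      refine hTS.isBase_of_maximal fun J hJ hSJ => ?_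
      have hJk := ((hTindep J).1 hJ).2
      exact Set.eq_of_subset_of_ncard_le hSJ (by omega) (Set.toFinite J)
    refine ⟨hbase, fun C e hC he hmin hsub => ?_⟩
    by_cases hMC : M.Indep C
    · -- then C must be too big: ncard C > k
      have hCk : ¬ C.ncard ≤ k := fun h =>
        hC.1.not_indep ((hTindep C).2 ⟨hMC, h⟩)
      have hdiff : (C \ {e}).ncard = C.ncard - 1 :=
        Set.ncard_diff_singleton_of_mem he
      have hSC : C \ {e} = S :=
        Set.eq_of_subset_of_ncard_le hsub (by omega) (Set.toFinite _)
      have h0C : (0 : Fin n) ∈ C := (hSC ▸ h0 : (0:Fin n) ∈ C \ {e}).1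
      have he0 : e = 0 := le_antisymm (hmin 0 h0C) (Fin.zero_le e)
      have : (0 : Fin n) ∈ C \ {e} := hSC ▸ h0
      exact this.2 (by simp [he0])
    · obtain ⟨C', hC'C, hC'⟩ := exists_circuit' M hE hMC
      obtain ⟨e', he', hmin'⟩ := circuit'_exists_min hC'
      refine hnbc C' e' hC' he' hmin' fun x hx => ?_
      obtain ⟨hxC', hxe'⟩ := hx
      have hxC : x ∈ C := hC'C hxC'
      by_cases hxe : x = e
      · -- then e ∈ C', so e' ≤ e and e ≤ e', so e' = e = x, contradiction
        subst hxe
        have h1 : e' ≤ x := hmin' x hxC'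
        have h2 : x ≤ e' := hmin e' (hC'C he')
        exact absurd (le_antisymm h1 h2).symm hxe'
      · exact hsub ⟨hxC, hxe⟩
  · rintro ⟨hbase, hnbcT⟩
    have hTS : T.Indep S := hbase.indep
    obtain ⟨hSind, hSk⟩ := (hTindep S).1 hTS
    have hcard : S.ncard = k := by
      by_contra hne
      have hlt : S.ncard < k := lt_of_le_of_ne hSk hne
      have hnotbase : ¬ M.IsBase S := fun h => by
        have := hr S h; omega
      obtain ⟨B0, hB0⟩ := M.exists_isBase
      obtain ⟨x, hx, hxind⟩ := hSind.exists_insert_of_not_isBase hnotbase hB0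
      have hxS : x ∉ S := hx.2
      have hxT : T.Indep (insert x S) := (hTindep _).2 ⟨hxind, by
        rw [Set.ncard_insert_of_notMem hxS (Set.toFinite S)]; omega⟩
      have := hbase.eq_of_subset_indep hxT (Set.subset_insert _ _)
      exact hxS (this ▸ Set.mem_insert x S)
    have h0 : (0 : Fin n) ∈ S := by
      by_contra h0
      have hdep : ¬ T.Indep (insert 0 S) := fun h => by
        have := ((hTindep _).1 h).2
        rw [Set.ncard_insert_of_notMem h0 (Set.toFinite S)] at this
        omega
      obtain ⟨C, hCS, hC⟩ := exists_circuit' T hTE hdep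
      have h0C : (0 : Fin n) ∈ C := by
        by_contra h0C
        have : C ⊆ S := fun x hx => by
          rcases hCS hx with h | h
          · exact absurd (h ▸ hx) h0C
          · exact h
        exact hC.1.not_indep (hTS.subset this)
      refine hnbcT C 0 hC h0C (fun x _ => Fin.zero_le x) fun x hx => ?_
      rcases hCS hx.1 with h | h
      · exact absurd h hx.2
      · exact h
    refine ⟨hcard, h0, fun C e hC he hmin hsub => ?_⟩
    have hCk : (C \ {e}).ncard ≤ k := hcard ▸ Set.ncard_le_ncard hsub (Set.toFinite S)
    have hdiff : (C \ {e}).ncard = C.ncard - 1 :=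
      Set.ncard_diff_singleton_of_mem he
    have hCpos : 0 < C.ncard := (Set.ncard_pos (Set.toFinite C)).2 ⟨e, he⟩
    by_cases hsize : C.ncard ≤ k
    · -- C is also a T-circuit
      have hTC : T.IsCircuit' C := by
        refine ⟨Matroid.dep_iff.mpr ⟨fun h => hC.1.not_indep ((hTindep C).1 h).1,
          by rw [hTE]; exact Set.subset_univ _⟩, fun D hD => ?_⟩
        refine (hTindep D).2 ⟨hC.2 D hD, ?_⟩
        have := Set.ncard_lt_ncard hD (Set.toFinite C)
        omega
      exact hnbcT C e hTC he hmin hsub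
    · -- |C| = k+1, so C \ {e} = S, and 0 ∈ S forces e = 0 ∈ S, contradiction
      have hSC : C \ {e} = S :=
        Set.eq_of_subset_of_ncard_le hsub (by omega) (Set.toFinite _)
      have h0C : (0 : Fin n) ∈ C := (hSC ▸ h0 : (0:Fin n) ∈ C \ {e}).1
      have he0 : e = 0 := le_antisymm (hmin 0 h0C) (Fin.zero_le e)
      have : (0 : Fin n) ∈ C \ {e} := hSC ▸ h0
      exact this.2 (by simp [he0])
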